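/- (Consequence of Propositions 4 and 5.) Let X be a type, ι a finite index type, H a complex inner product space, and T : ι → (H →ₗ[ℂ] H) with T i ∘ T j = −(T j ∘ T i) for all i, j. Let φ : ι → X → ℂ and define the field operators ψ x = Σ_i (φ i x) • T i. If v ∈ H satisfies perfect first-order coherence everywhere, i.e., |⟪ψ x v, ψ y v⟫| = ‖ψ x v‖ · ‖ψ y v‖ for all x, y ∈ X, then ψ x (ψ y v) = 0 for all x, y ∈ X: it is impossible to find a fermion at x and another fermion at y, so the state contains at most one particle. -/

import Mathlib

open scoped ComplexInnerProductSpace in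
/-- Propositions 4 & 5: if a state `v` of a fermion field
`ψ x = ∑ i, φ i x • T i` (with pairwise anticommuting mode operators `T i`)
has perfect first-order coherence everywhere, then `ψ x (ψ y v) = 0` for all
`x, y`: the state contains at most one particle. -/
theorem perfect_first_order_coherence_at_most_one_fermion
    {X : Type*} {ι : Type*} [Fintype ι]
    {H : Type*} [NormedAddCommGroup H] [InnerProductSpace ℂ H]
    (T : ι → (H →ₗ[ℂ] H)) (hT : ∀ i j, T i ∘ₗ T j = -(T j ∘ₗ T i))
    (φ : ι → X → ℂ)
    (ψ : X → (H →ₗ[ℂ] H)) (hψ : ∀ x, ψ x = ∑ i, φ i x • T i)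
    (v : H)
    (hcoh : ∀ x y : X, ‖⟪ψ x v, ψ y v⟫‖ = ‖ψ x v‖ * ‖ψ y v‖) :
    ∀ x y : X, ψ x (ψ y v) = 0 := by
  have hTT : ∀ i j (w : H), T i (T j w) = -(T j (T i w)) := by
    intro i j w
    have := congrArg (fun f : H →ₗ[ℂ] H => f w) (hT i j)
    simpa using this
  have hanti : ∀ x y (w : H), ψ x (ψ y w) = -(ψ y (ψ x w)) := by
    intro x y w
    simp only [hψ, LinearMap.sum_apply, LinearMap.smul_apply, map_sum, map_smul,
      Finset.smul_sum]
    rw [Finset.sum_comm, ← Finset.sum_neg_distrib]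
    refine Finset.sum_congr rfl fun j _ => ?_
    rw [← Finset.sum_neg_distrib]
    refine Finset.sum_congr rfl fun i _ => ?_
    rw [hTT, smul_neg, smul_neg, smul_comm]
  have hsq : ∀ x (w : H), ψ x (ψ x w) = 0 := by
    intro x w
    have h := hanti x x w
    have : (2 : ℂ) • ψ x (ψ x w) = 0 := by
      rw [two_smul]; nth_rewrite 1 [h]; exact neg_add_cancel _
    simpa using smul_eq_zero.mp this |>.resolve_left (by norm_num)
  intro x y
  by_cases hx : ψ x v = 0
  · rw [hanti, hx, map_zero, neg_zero]
  by_cases hy : ψ y v = 0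
  · rw [hy, map_zero]
  obtain ⟨r, -, hr⟩ := (norm_inner_eq_norm_iff hx hy).mp (by exact hcoh x y)
  rw [hr, map_smul, hsq, smul_zero]
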